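/- Let A be a left-symmetric conformal algebra and (M, l_A, r_A) a finite module over A. Then ρ := l_A - r_A is a representation of the sub-adjacent Lie conformal algebra g(A) on M, i.e. ρ([a_λ b])_{λ+μ} v = ρ(a)_λ(ρ(b)_μ v) - ρ(b)_μ(ρ(a)_λ v), where [a_λ b] = a_λ b - b_{-λ-∂} a. -/

import Mathlib

open Finsupp

noncomputable section

/-- Coefficient of `λ^k` of the substitution `μ ↦ -λ-∂` applied to the polynomial
`Σₙ μ^n • (f n)` with coefficients in `A` (with `∂` acting on the coefficients). -/
def csubst {A : Type} [AddCommGroup A] [Module ℂ A]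
    (D : Module.End ℂ A) (f : ℕ →₀ A) (k : ℕ) : A :=
  f.sum fun n c => ((-1 : ℂ) ^ n * (n.choose k : ℂ)) • (D ^ (n - k)) c

/-- Coefficient of `λ^n μ^m` of `(a_λ b)_{λ+μ} c`, for a λ-product `m₁` on `A`
and a λ-action `m₂` of `A` on `V`. -/
def comp2 {A V : Type} [AddCommGroup A] [Module ℂ A] [AddCommGroup V] [Module ℂ V]
    (m₁ : A →ₗ[ℂ] A →ₗ[ℂ] (ℕ →₀ A)) (m₂ : A →ₗ[ℂ] V →ₗ[ℂ] (ℕ →₀ V))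
    (a b : A) (c : V) (n m : ℕ) : V :=
  ∑ i ∈ Finset.range (n + 1),
    (((m + n - i).choose (n - i) : ℕ) : ℂ) • m₂ (m₁ a b i) c (m + n - i)

/-- A conformal algebra: a `ℂ[∂]`-module with a sesquilinear λ-product,
encoded coefficientwise: `mul a b n` is the coefficient of `λ^n` in `a_λ b`. -/
structure ConfAlg (A : Type) [AddCommGroup A] [Module ℂ A] where
  D : Module.End ℂ A
  mul : A →ₗ[ℂ] A →ₗ[ℂ] (ℕ →₀ A)
  sesq_left_zero : ∀ a b, mul (D a) b 0 = 0
  sesq_left : ∀ a b n, mul (D a) b (n + 1) = - mul a b n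
  sesq_right_zero : ∀ a b, mul a (D b) 0 = D (mul a b 0)
  sesq_right : ∀ a b n, mul a (D b) (n + 1) = D (mul a b (n + 1)) + mul a b n

/-- A Lie conformal algebra: skew-symmetry `[a_λ b] = -[b_{-λ-∂} a]` and the
Jacobi identity `[a_λ[b_μ c]] = [[a_λ b]_{λ+μ} c] + [b_μ[a_λ c]]`, coefficientwise. -/
structure LieConfAlg (A : Type) [AddCommGroup A] [Module ℂ A] extends ConfAlg A where
  skew : ∀ a b k, mul a b k = - csubst D (mul b a) k
  jacobi : ∀ a b c n m,
    mul a (mul b c m) n = comp2 mul mul a b c n m + mul b (mul a c n) m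

/-- A left-symmetric conformal algebra:
`(a_λ b)_{λ+μ} c - a_λ(b_μ c) = (b_μ a)_{λ+μ} c - b_μ(a_λ c)`, coefficientwise. -/
structure LSConfAlg (A : Type) [AddCommGroup A] [Module ℂ A] extends ConfAlg A where
  lsym : ∀ a b c n m,
    comp2 mul mul a b c n m - mul a (mul b c m) n
      = comp2 mul mul b a c m n - mul b (mul a c n) m

/-- Coefficient of `λ^p μ^q` of the substitution `ν ↦ -λ-μ-∂` applied to
`Σⱼ ν^j • (f j)`. -/
def csubst2 {M : Type} [AddCommGroup M] [Module ℂ M]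
    (D : Module.End ℂ M) (f : ℕ →₀ M) (p q : ℕ) : M :=
  f.sum fun j c =>
    ((-1 : ℂ) ^ j * (j.choose p : ℂ) * ((j - p).choose q : ℂ)) • (D ^ (j - p - q)) c

/-- A module `(M, l, r)` over a left-symmetric conformal algebra `S`,
encoded coefficientwise (with `r a` encoding `r_A(a)_λ`). -/
structure LSConfMod {A : Type} [AddCommGroup A] [Module ℂ A]
    (S : LSConfAlg A) (M : Type) [AddCommGroup M] [Module ℂ M] where
  DM : Module.End ℂ M
  l : A →ₗ[ℂ] M →ₗ[ℂ] (ℕ →₀ M)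
  r : A →ₗ[ℂ] M →ₗ[ℂ] (ℕ →₀ M)
  l_sesq_left_zero : ∀ a v, l (S.D a) v 0 = 0
  l_sesq_left : ∀ a v n, l (S.D a) v (n + 1) = - l a v n
  l_sesq_right_zero : ∀ a v, l a (DM v) 0 = DM (l a v 0)
  l_sesq_right : ∀ a v n, l a (DM v) (n + 1) = DM (l a v (n + 1)) + l a v n
  r_sesq_left_zero : ∀ a v, r (S.D a) v 0 = 0
  r_sesq_left : ∀ a v n, r (S.D a) v (n + 1) = - r a v n
  r_sesq_right_zero : ∀ a v, r a (DM v) 0 = DM (r a v 0)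
  r_sesq_right : ∀ a v n, r a (DM v) (n + 1) = DM (r a v (n + 1)) + r a v n
  compat_l : ∀ a b v n m,
    comp2 S.mul l a b v n m - l a (l b v m) n
      = comp2 S.mul l b a v m n - l b (l a v n) m
  compat_r : ∀ a b v n m,
    (∑ i ∈ Finset.range (n + 1), csubst2 DM (r b (l a v i)) (n - i) m)
        - l a (csubst DM (r b v) m) n
      = (∑ i ∈ Finset.range (n + 1), csubst2 DM (r b (r a v i)) (n - i) m)
        - csubst DM (r (S.mul a b n) v) m


section AuxLemmas
open Finset

lemma powD_comp {M : Type} [AddCommGroup M] [Module ℂ M] (D : Module.End ℂ M)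
    (a b : ℕ) (x : M) : (D ^ a) ((D ^ b) x) = (D ^ (a + b)) x := by
  rw [pow_add, Module.End.mul_apply]

lemma alt (N B : ℕ) (h : N ≤ B) :
    ∑ i ∈ range (B + 1), ((-1 : ℂ) ^ i * (N.choose i : ℂ)) = if N = 0 then 1 else 0 := by
  have h0 : ∑ i ∈ range (N + 1), ((-1 : ℂ) ^ i * (N.choose i : ℂ))
      = if N = 0 then 1 else 0 := by
    have h1 : ((∑ m ∈ range (N + 1), ((-1) ^ m * N.choose m : ℤ) : ℤ) : ℂ)
        = ((if N = 0 then 1 else 0 : ℤ) : ℂ) := by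
      rw [Int.alternating_sum_range_choose]
    push_cast at h1
    convert h1 using 2
  rw [← h0]
  symm
  apply Finset.sum_subset (Finset.range_subset_range.2 (by omega))
  intro x hx hnx
  simp only [Finset.mem_range] at hx hnx
  have : N < x := by omega
  simp [Nat.choose_eq_zero_of_lt this]

/-- `C(n,a) C(n-a,b) = C(n,b) C(n-b,a)` (both equal the multinomial, or both vanish). -/
lemma comb_swap (n a b : ℕ) :
    n.choose a * (n - a).choose b = n.choose b * (n - b).choose a := by
  by_cases h : a + b ≤ n
  · have h1 := Nat.choose_mul (n := n) (k := a + b) (s := a) (Nat.le_add_right a b)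
    have h2 := Nat.choose_mul (n := n) (k := a + b) (s := b) (Nat.le_add_left b a)
    have h3 : (a + b).choose a = (a + b).choose b := by
      rw [← Nat.choose_symm (Nat.le_add_right a b)]
      congr 1
      omega
    have e1 : (a + b) - a = b := by omega
    have e2 : (a + b) - b = a := by omega
    rw [e1] at h1
    rw [e2] at h2
    rw [← h1, ← h2, h3]
  · -- both sides are zero
    by_cases ha : a ≤ n
    · by_cases hb : b ≤ n
      · have z1 : (n - a).choose b = 0 := Nat.choose_eq_zero_of_lt (by omega)
        have z2 : (n - b).choose a = 0 := Nat.choose_eq_zero_of_lt (by omega)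
        rw [z1, z2, Nat.mul_zero, Nat.mul_zero]
      · have z1 : n.choose b = 0 := Nat.choose_eq_zero_of_lt (by omega)
        have z2 : (n - a).choose b = 0 := Nat.choose_eq_zero_of_lt (by omega)
        rw [z1, z2, Nat.mul_zero, Nat.zero_mul]
    · have z1 : n.choose a = 0 := Nat.choose_eq_zero_of_lt (by omega)
      have z2 : (n - b).choose a = 0 := Nat.choose_eq_zero_of_lt (by omega)
      rw [z1, z2, Nat.mul_zero, Nat.zero_mul]

lemma L1 (N m B : ℕ) (h : N ≤ B) :
    ∑ k ∈ range (B + 1), (-1 : ℂ) ^ k * (N.choose k : ℂ) * (k.choose m : ℂ)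
      = if N = m then (-1 : ℂ) ^ m else 0 := by
  by_cases hm : m ≤ N
  · have hstep : ∑ k ∈ range (B + 1), (-1 : ℂ) ^ k * (N.choose k : ℂ) * (k.choose m : ℂ)
        = ∑ k ∈ Finset.Ico m (N + 1), (-1 : ℂ) ^ k * (N.choose k : ℂ) * (k.choose m : ℂ) := by
      symm
      apply Finset.sum_subset
      · intro x hx
        simp only [Finset.mem_Ico] at hx
        simp only [Finset.mem_range]
        omega
      · intro x hx hnx
        simp only [Finset.mem_range] at hx
        simp only [Finset.mem_Ico] at hnx
        rcases lt_or_ge x m with hlt | hge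
        · simp [Nat.choose_eq_zero_of_lt hlt]
        · have : N < x := by omega
          simp [Nat.choose_eq_zero_of_lt this]
    rw [hstep, Finset.sum_Ico_eq_sum_range]
    have hr : N + 1 - m = (N - m) + 1 := by omega
    rw [hr]
    have hterm : ∀ u ∈ range ((N - m) + 1),
        (-1 : ℂ) ^ (m + u) * (N.choose (m + u) : ℂ) * ((m + u).choose m : ℂ)
        = ((-1 : ℂ) ^ m * (N.choose m : ℂ)) * ((-1 : ℂ) ^ u * ((N - m).choose u : ℂ)) := by
      intro u hu
      simp only [Finset.mem_range] at hu
      have hc : N.choose (m + u) * (m + u).choose m = N.choose m * (N - m).choose u := by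
        have := Nat.choose_mul (n := N) (k := m + u) (s := m) (by omega)
        simpa using this
      have hc' : (N.choose (m + u) : ℂ) * ((m + u).choose m : ℂ)
          = (N.choose m : ℂ) * ((N - m).choose u : ℂ) := by
        exact_mod_cast congrArg (Nat.cast : ℕ → ℂ) hc
      rw [pow_add]
      linear_combination ((-1 : ℂ) ^ m * (-1 : ℂ) ^ u) * hc'
    rw [Finset.sum_congr rfl hterm, ← Finset.mul_sum,
      alt (N - m) (N - m) le_rfl]
    by_cases hNm : N = m
    · rw [if_pos hNm, if_pos (by omega)]
      subst hNm
      simp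
    · rw [if_neg (by omega), if_neg hNm, mul_zero]
  · -- m > N : everything vanishes
    rw [if_neg (by omega)]
    apply Finset.sum_eq_zero
    intro k hk
    rcases le_or_gt k N with hkN | hkN
    · have : k < m := by omega
      simp [Nat.choose_eq_zero_of_lt this]
    · simp [Nat.choose_eq_zero_of_lt hkN]

lemma L3b (j s m t B : ℕ) (h : j ≤ B) :
    ∑ k ∈ range (B + 1), (-1 : ℂ) ^ k * (j.choose k : ℂ) * (k.choose s : ℂ)
        * ((k - s).choose m : ℂ) * ((j - k).choose t : ℂ)
      = if j = s + m + t then (-1 : ℂ) ^ (j + t) * ((j.choose s : ℂ) * ((j - s).choose t : ℂ))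
        else 0 := by
  have hstep : ∑ k ∈ range (B + 1), (-1 : ℂ) ^ k * (j.choose k : ℂ) * (k.choose s : ℂ)
        * ((k - s).choose m : ℂ) * ((j - k).choose t : ℂ)
      = ∑ k ∈ Finset.Ico s (j + 1), (-1 : ℂ) ^ k * (j.choose k : ℂ) * (k.choose s : ℂ)
        * ((k - s).choose m : ℂ) * ((j - k).choose t : ℂ) := by
    symm
    apply Finset.sum_subset
    · intro x hx
      simp only [Finset.mem_Ico] at hx
      simp only [Finset.mem_range]
      omega
    · intro x hx hnx
      simp only [Finset.mem_range] at hx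
      simp only [Finset.mem_Ico] at hnx
      rcases lt_or_ge x s with hlt | hge
      · simp [Nat.choose_eq_zero_of_lt hlt]
      · have : j < x := by omega
        simp [Nat.choose_eq_zero_of_lt this]
  rw [hstep, Finset.sum_Ico_eq_sum_range]
  by_cases hsj : s ≤ j
  · have hr : j + 1 - s = (j - s) + 1 := by omega
    rw [hr]
    have hterm : ∀ u ∈ range ((j - s) + 1),
        (-1 : ℂ) ^ (s + u) * (j.choose (s + u) : ℂ) * ((s + u).choose s : ℂ)
          * (((s + u) - s).choose m : ℂ) * ((j - (s + u)).choose t : ℂ)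
        = ((-1 : ℂ) ^ s * (j.choose s : ℂ) * ((j - s).choose t : ℂ))
          * ((-1 : ℂ) ^ u * (((j - s) - t).choose u : ℂ) * (u.choose m : ℂ)) := by
      intro u hu
      simp only [Finset.mem_range] at hu
      have e1 : (s + u) - s = u := by omega
      have e2 : j - (s + u) = (j - s) - u := by omega
      have hc1 : j.choose (s + u) * (s + u).choose s = j.choose s * (j - s).choose u := by
        have := Nat.choose_mul (n := j) (k := s + u) (s := s) (by omega)
        simpa using this
      have hc2 : (j - s).choose u * ((j - s) - u).choose t
          = (j - s).choose t * ((j - s) - t).choose u := comb_swap (j - s) u t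
      have hc1' : (j.choose (s + u) : ℂ) * ((s + u).choose s : ℂ)
          = (j.choose s : ℂ) * ((j - s).choose u : ℂ) :=
        mod_cast congrArg (Nat.cast : ℕ → ℂ) hc1
      have hc2' : ((j - s).choose u : ℂ) * (((j - s) - u).choose t : ℂ)
          = ((j - s).choose t : ℂ) * (((j - s) - t).choose u : ℂ) :=
        mod_cast congrArg (Nat.cast : ℕ → ℂ) hc2
      rw [e1, e2, pow_add]
      linear_combination ((-1 : ℂ) ^ s * (-1 : ℂ) ^ u * (((j - s) - u).choose t : ℂ)
          * (u.choose m : ℂ)) * hc1'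
        + ((-1 : ℂ) ^ s * (-1 : ℂ) ^ u * (j.choose s : ℂ) * (u.choose m : ℂ)) * hc2'
    rw [Finset.sum_congr rfl hterm, ← Finset.mul_sum]
    have halt : ∑ u ∈ range ((j - s) + 1),
        (-1 : ℂ) ^ u * (((j - s) - t).choose u : ℂ) * (u.choose m : ℂ)
        = if (j - s) - t = m then (-1 : ℂ) ^ m else 0 :=
      L1 ((j - s) - t) m (j - s) (by omega)
    rw [halt]
    by_cases hc : j = s + m + t
    · have ht : t ≤ j - s := by omega
      rw [if_pos (by omega), if_pos hc]
      have hsgn : (-1 : ℂ) ^ s * (-1 : ℂ) ^ m = (-1 : ℂ) ^ (j + t) := by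
        have : j + t = s + m + 2 * t := by omega
        rw [this, pow_add, pow_add, pow_mul, neg_one_sq, one_pow, mul_one]
      linear_combination ((j.choose s : ℂ) * ((j - s).choose t : ℂ)) * hsgn
    · rw [if_neg hc]
      by_cases hd : (j - s) - t = m
      · -- then t > j - s must hold, so the (j-s).choose t factor is zero
        have ht : j - s < t := by omega
        rw [if_pos hd]
        simp [Nat.choose_eq_zero_of_lt ht]
      · rw [if_neg hd, mul_zero]
  · -- s > j : empty sum
    have : j + 1 - s = 0 := by omega
    rw [this]
    simp only [Finset.range_zero, Finset.sum_empty]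
    rw [if_neg (by omega)]

lemma L3a (j s m B : ℕ) (h : j ≤ B) :
    ∑ k ∈ range (B + 1), (-1 : ℂ) ^ k * (j.choose k : ℂ) * (k.choose s : ℂ)
        * ((k - s).choose m : ℂ)
      = if j = s + m then (-1 : ℂ) ^ j * (j.choose s : ℂ) else 0 := by
  have h1 : ∑ k ∈ range (B + 1), (-1 : ℂ) ^ k * (j.choose k : ℂ) * (k.choose s : ℂ)
        * ((k - s).choose m : ℂ)
      = ∑ k ∈ range (B + 1), (-1 : ℂ) ^ k * (j.choose k : ℂ) * (k.choose s : ℂ)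
        * ((k - s).choose m : ℂ) * ((j - k).choose 0 : ℂ) := by
    apply Finset.sum_congr rfl
    intro k _
    rw [Nat.choose_zero_right]
    push_cast
    ring
  rw [h1, L3b j s m 0 B h]
  by_cases hc : j = s + m
  · rw [if_pos (by omega), if_pos hc]
    rw [Nat.choose_zero_right]
    push_cast
    ring
  · rw [if_neg (by omega), if_neg hc]

lemma L4 (n m : ℕ) :
    ∑ q ∈ range (n + 1), (-1 : ℂ) ^ q * ((n + m).choose q : ℂ)
        * (((n - q) + m).choose (n - q) : ℂ)
      = if n = 0 then 1 else 0 := by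
  have hterm : ∀ q ∈ range (n + 1),
      (-1 : ℂ) ^ q * ((n + m).choose q : ℂ) * (((n - q) + m).choose (n - q) : ℂ)
      = ((n + m).choose n : ℂ) * ((-1 : ℂ) ^ q * (n.choose q : ℂ)) := by
    intro q hq
    simp only [Finset.mem_range] at hq
    have hc : (n + m).choose n * n.choose q = (n + m).choose q * ((n + m) - q).choose (n - q) :=
      Nat.choose_mul (by omega)
    have e1 : (n + m) - q = (n - q) + m := by omega
    rw [e1] at hc
    have hc' : ((n + m).choose n : ℂ) * (n.choose q : ℂ)
        = ((n + m).choose q : ℂ) * (((n - q) + m).choose (n - q) : ℂ) :=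
      mod_cast congrArg (Nat.cast : ℕ → ℂ) hc
    linear_combination ((-1 : ℂ) ^ q) * hc'.symm
  rw [Finset.sum_congr rfl hterm, ← Finset.mul_sum, alt n n le_rfl]
  by_cases hn : n = 0
  · subst hn; simp
  · rw [if_neg hn, mul_zero]

lemma L2 (j n m : ℕ) (h : j ≤ m + n) :
    ∑ i ∈ range (n + 1), (-1 : ℂ) ^ i * (j.choose i : ℂ) * ((m + n - i).choose (n - i) : ℂ)
      = ((m + n - j).choose n : ℂ) := by
  -- replace C(m+n-i, n-i) by C(m+n-i, m)
  have hsym : ∀ i ∈ range (n + 1),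
      (-1 : ℂ) ^ i * (j.choose i : ℂ) * ((m + n - i).choose (n - i) : ℂ)
      = (-1 : ℂ) ^ i * (j.choose i : ℂ) * ((m + n - i).choose m : ℂ) := by
    intro i hi
    simp only [Finset.mem_range] at hi
    have : (m + n - i).choose (n - i) = (m + n - i).choose m := by
      rw [← Nat.choose_symm (show n - i ≤ m + n - i by omega)]
      congr 1
      omega
    rw [this]
  rw [Finset.sum_congr rfl hsym]
  set M := max n j with hM
  have hext : ∑ i ∈ range (n + 1), (-1 : ℂ) ^ i * (j.choose i : ℂ) * ((m + n - i).choose m : ℂ)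
      = ∑ i ∈ range (M + 1), (-1 : ℂ) ^ i * (j.choose i : ℂ) * ((m + n - i).choose m : ℂ) := by
    apply Finset.sum_subset (Finset.range_subset_range.2 (by omega))
    intro x hx hnx
    simp only [Finset.mem_range] at hx hnx
    have hx1 : n < x := by omega
    have hx2 : x ≤ m + n := by omega
    have : m + n - x < m := by omega
    simp [Nat.choose_eq_zero_of_lt this]
  have hshr : ∑ i ∈ range (j + 1), (-1 : ℂ) ^ i * (j.choose i : ℂ) * ((m + n - i).choose m : ℂ)
      = ∑ i ∈ range (M + 1), (-1 : ℂ) ^ i * (j.choose i : ℂ) * ((m + n - i).choose m : ℂ) := by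
    apply Finset.sum_subset (Finset.range_subset_range.2 (by omega))
    intro x hx hnx
    simp only [Finset.mem_range] at hx hnx
    have : j < x := by omega
    simp [Nat.choose_eq_zero_of_lt this]
  rw [hext, ← hshr]
  -- now use polynomials
  have hpoly : ∑ i ∈ range (j + 1),
        Polynomial.C ((-1 : ℂ) ^ i * (j.choose i : ℂ)) * (Polynomial.X + 1) ^ (m + n - i)
      = (Polynomial.X + 1) ^ (m + n - j) * Polynomial.X ^ j := by
    have hXj : (Polynomial.X : Polynomial ℂ) ^ j = ∑ i ∈ range (j + 1),
        (-1 : Polynomial ℂ) ^ i * (Polynomial.X + 1) ^ (j - i) * (j.choose i : Polynomial ℂ) := by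
      have := add_pow (-1 : Polynomial ℂ) (Polynomial.X + 1) j
      have he : (-1 : Polynomial ℂ) + (Polynomial.X + 1) = Polynomial.X := by ring
      rw [he] at this
      rw [this]
    rw [hXj, Finset.mul_sum]
    apply Finset.sum_congr rfl
    intro i hi
    simp only [Finset.mem_range] at hi
    have he : m + n - i = (m + n - j) + (j - i) := by omega
    rw [he, pow_add]
    have hC : Polynomial.C ((-1 : ℂ) ^ i * (j.choose i : ℂ))
        = (-1 : Polynomial ℂ) ^ i * (j.choose i : Polynomial ℂ) := by
      rw [map_mul]
      norm_cast
      simp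
    rw [hC]
    ring
  have hcoeff := congrArg (fun p => Polynomial.coeff p m) hpoly
  simp only [Polynomial.finset_sum_coeff, Polynomial.coeff_C_mul,
    Polynomial.coeff_X_add_one_pow] at hcoeff
  rw [Polynomial.coeff_mul_X_pow'] at hcoeff
  rw [hcoeff]
  by_cases hjm : j ≤ m
  · rw [if_pos hjm, Polynomial.coeff_X_add_one_pow]
    have : (m + n - j).choose (m - j) = (m + n - j).choose n := by
      rw [← Nat.choose_symm (show m - j ≤ m + n - j by omega)]
      congr 1
      omega
    rw [this]
  · rw [if_neg hjm]
    have : m + n - j < n := by omega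
    rw [Nat.choose_eq_zero_of_lt this]
    simp

lemma L6 (j n m : ℕ) (hjm : j ≠ m) :
    ∑ p ∈ range (n + 1),
      (if (n - p) + m ≤ j ∧ j - ((n - p) + m) ≤ p
        then (-1 : ℂ) ^ (j - ((n - p) + m)) * (j.choose (n - p) : ℂ)
          * ((j - (n - p)).choose (j - ((n - p) + m)) : ℂ)
        else 0)
      = 0 := by
  rw [← Finset.sum_range_reflect]
  by_cases hjm' : j < m
  · apply Finset.sum_eq_zero
    intro s hs
    rw [if_neg (by omega)]
  · have hV : m < j := by omega
    set V := j - m with hVdef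
    by_cases hVn : V ≤ n
    · have hstep : ∀ s ∈ range (n + 1),
          (if (n - (n + 1 - 1 - s)) + m ≤ j ∧ j - ((n - (n + 1 - 1 - s)) + m) ≤ n + 1 - 1 - s
            then (-1 : ℂ) ^ (j - ((n - (n + 1 - 1 - s)) + m)) * (j.choose (n - (n + 1 - 1 - s)) : ℂ)
              * ((j - (n - (n + 1 - 1 - s))).choose (j - ((n - (n + 1 - 1 - s)) + m)) : ℂ)
            else 0)
          = (if s ≤ V then ((-1 : ℂ) ^ V * (j.choose V : ℂ))
              * ((-1 : ℂ) ^ s * (V.choose s : ℂ)) else 0) := by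
        intro s hs
        simp only [Finset.mem_range] at hs
        have e0 : n + 1 - 1 - s = n - s := by omega
        rw [e0]
        have e1 : n - (n - s) = s := by omega
        rw [e1]
        by_cases hc : s + m ≤ j ∧ j - (s + m) ≤ n - s
        · rw [if_pos hc, if_pos (by omega)]
          have e2 : j - (s + m) = V - s := by omega
          rw [e2]
          have hc1 : j.choose V * V.choose s = j.choose s * (j - s).choose (V - s) :=
            Nat.choose_mul (by omega)
          have hc1' : (j.choose V : ℂ) * (V.choose s : ℂ)
              = (j.choose s : ℂ) * ((j - s).choose (V - s) : ℂ) :=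
            mod_cast congrArg (Nat.cast : ℕ → ℂ) hc1
          have hpow : (-1 : ℂ) ^ V * (-1 : ℂ) ^ s = (-1 : ℂ) ^ (V - s) := by
            rw [← pow_add, show V + s = (V - s) + 2 * s by omega, pow_add, pow_mul,
              neg_one_sq, one_pow, mul_one]
          rw [← hpow]
          linear_combination ((-1 : ℂ) ^ V * (-1 : ℂ) ^ s) * hc1'.symm
        · rw [if_neg hc, if_neg (by omega)]
      rw [Finset.sum_congr rfl hstep]
      have hres : ∑ s ∈ range (n + 1), (if s ≤ V then ((-1 : ℂ) ^ V * (j.choose V : ℂ))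
          * ((-1 : ℂ) ^ s * (V.choose s : ℂ)) else 0)
          = ∑ s ∈ range (V + 1), ((-1 : ℂ) ^ V * (j.choose V : ℂ))
          * ((-1 : ℂ) ^ s * (V.choose s : ℂ)) := by
        symm
        rw [Finset.sum_congr rfl (g := fun s => if s ≤ V then ((-1 : ℂ) ^ V * (j.choose V : ℂ))
          * ((-1 : ℂ) ^ s * (V.choose s : ℂ)) else 0) (fun s hs => by
            simp only [Finset.mem_range] at hs
            rw [if_pos (by omega)])]
        apply Finset.sum_subset (Finset.range_subset_range.2 (by omega))
        intro x hx hnx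
        simp only [Finset.mem_range] at hx hnx
        rw [if_neg (by omega)]
      rw [hres, ← Finset.mul_sum]
      have := alt V V le_rfl
      rw [this, if_neg (by omega), mul_zero]
    · apply Finset.sum_eq_zero
      intro s hs
      rw [if_neg (by omega)]

end AuxLemmas


section ModuleLemmas
open Finset

variable {A M : Type} [AddCommGroup A] [Module ℂ A] [AddCommGroup M] [Module ℂ M]

/-- Left sesquilinearity for powers of `D`. -/
lemma M2 (DA : Module.End ℂ A) (l : A →ₗ[ℂ] M →ₗ[ℂ] (ℕ →₀ M))
    (h0 : ∀ c v, l (DA c) v 0 = 0)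
    (h1 : ∀ c v k, l (DA c) v (k + 1) = - l c v k) :
    ∀ (s : ℕ) (c : A) (v : M) (k : ℕ),
      l ((DA ^ s) c) v k = if s ≤ k then ((-1 : ℂ) ^ s) • l c v (k - s) else 0 := by
  intro s
  induction s with
  | zero =>
    intro c v k
    simp
  | succ s ih =>
    intro c v k
    have hps : (DA ^ (s + 1)) c = (DA ^ s) (DA c) := by
      rw [pow_succ, Module.End.mul_apply]
    rw [hps, ih (DA c) v k]
    by_cases hsk : s ≤ k
    · rw [if_pos hsk]
      rcases Nat.eq_or_lt_of_le hsk with heq | hlt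
      · rw [if_neg (by omega)]
        rw [show k - s = 0 by omega, h0, smul_zero]
      · rw [if_pos (by omega)]
        have he : k - s = (k - (s + 1)) + 1 := by omega
        rw [he, h1, pow_succ, mul_smul, neg_one_smul ℂ, smul_neg]
    · rw [if_neg hsk, if_neg (by omega)]

/-- Right sesquilinearity for powers of `D` (binomial conjugation). -/
lemma M1 (DM : Module.End ℂ M) (φ : M →ₗ[ℂ] (ℕ →₀ M))
    (h0 : ∀ v, φ (DM v) 0 = DM (φ v 0))
    (h1 : ∀ v k, φ (DM v) (k + 1) = DM (φ v (k + 1)) + φ v k) :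
    ∀ (s : ℕ) (v : M) (p : ℕ),
      φ ((DM ^ s) v) p
        = ∑ t ∈ range (p + 1), ((s.choose t : ℕ) : ℂ) • (DM ^ (s - t)) (φ v (p - t)) := by
  intro s
  induction s with
  | zero =>
    intro v p
    rw [pow_zero, Module.End.one_apply]
    rw [Finset.sum_eq_single 0]
    · simp
    · intro t ht hne
      rw [Nat.choose_eq_zero_of_lt (by omega)]
      simp
    · intro h
      simp at h
  | succ s ih =>
    intro v p
    have hps : (DM ^ (s + 1)) v = DM ((DM ^ s) v) := by
      rw [pow_succ', Module.End.mul_apply]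
    rw [hps]
    cases p with
    | zero =>
      rw [h0, ih v 0]
      rw [Finset.sum_range_one, Finset.sum_range_one]
      simp only [Nat.choose_zero_right, Nat.cast_one, one_smul, Nat.sub_zero]
      rw [← Module.End.mul_apply, ← pow_succ']
    | succ q =>
      rw [h1, ih v (q + 1), ih v q, map_sum]
      have hfst : ∀ t ∈ range (q + 1 + 1),
          DM (((s.choose t : ℕ) : ℂ) • (DM ^ (s - t)) (φ v (q + 1 - t)))
          = ((s.choose t : ℕ) : ℂ) • (DM ^ ((s + 1) - t)) (φ v (q + 1 - t)) := by
        intro t ht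
        rw [map_smul]
        by_cases hts : t ≤ s
        · rw [← Module.End.mul_apply, ← pow_succ', show s - t + 1 = (s + 1) - t by omega]
        · rw [Nat.choose_eq_zero_of_lt (by omega)]
          simp
      rw [Finset.sum_congr rfl hfst]
      rw [Finset.sum_range_succ'
        (fun t => ((s.choose t : ℕ) : ℂ) • (DM ^ ((s + 1) - t)) (φ v (q + 1 - t))) (q + 1)]
      rw [Finset.sum_range_succ'
        (fun t => (((s + 1).choose t : ℕ) : ℂ) • (DM ^ ((s + 1) - t)) (φ v (q + 1 - t))) (q + 1)]
      simp only [Nat.succ_sub_succ, Nat.choose_zero_right, Nat.cast_one, one_smul,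
        Nat.sub_zero]
      have hpas : ∀ i ∈ range (q + 1),
          (((s + 1).choose (i + 1) : ℕ) : ℂ) • (DM ^ (s - i)) (φ v (q - i))
          = ((s.choose (i + 1) : ℕ) : ℂ) • (DM ^ (s - i)) (φ v (q - i))
            + ((s.choose i : ℕ) : ℂ) • (DM ^ (s - i)) (φ v (q - i)) := by
        intro i hi
        rw [Nat.choose_succ_succ]
        push_cast
        rw [add_smul]
        abel
      rw [Finset.sum_congr rfl hpas, Finset.sum_add_distrib]
      abel

/-- Substitution lemma: `T((g(-λ-∂))_{λ+μ} v)` coefficients equal those of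
`(g(μ))_{λ+μ} v`, for `T` left-sesquilinear. -/
lemma SA (DA : Module.End ℂ A) (l : A →ₗ[ℂ] M →ₗ[ℂ] (ℕ →₀ M))
    (h0 : ∀ c v, l (DA c) v 0 = 0)
    (h1 : ∀ c v k, l (DA c) v (k + 1) = - l c v k)
    (f : ℕ →₀ A) (v : M) (n m : ℕ) :
    ∑ i ∈ range (n + 1),
        (((m + n - i).choose (n - i) : ℕ) : ℂ) • l (csubst DA f i) v (m + n - i)
      = ∑ i ∈ range (m + 1),
        (((n + m - i).choose (m - i) : ℕ) : ℂ) • l (f i) v (n + m - i) := by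
  have hexp : ∀ i ∈ range (n + 1),
      (((m + n - i).choose (n - i) : ℕ) : ℂ) • l (csubst DA f i) v (m + n - i)
      = ∑ j ∈ f.support, ((((m + n - i).choose (n - i) : ℕ) : ℂ)
          * ((-1 : ℂ) ^ j * (j.choose i : ℂ)))
          • l ((DA ^ (j - i)) (f j)) v (m + n - i) := by
    intro i _
    have hcs : csubst DA f i
        = ∑ j ∈ f.support, ((-1 : ℂ) ^ j * (j.choose i : ℂ)) • (DA ^ (j - i)) (f j) := rfl
    rw [hcs, map_sum, LinearMap.sum_apply, Finsupp.finset_sum_apply, Finset.smul_sum]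
    apply Finset.sum_congr rfl
    intro j _
    rw [map_smul, LinearMap.smul_apply, Finsupp.smul_apply, smul_smul]
  rw [Finset.sum_congr rfl hexp, Finset.sum_comm]
  have hj : ∀ j ∈ f.support,
      ∑ i ∈ range (n + 1), ((((m + n - i).choose (n - i) : ℕ) : ℂ)
          * ((-1 : ℂ) ^ j * (j.choose i : ℂ)))
          • l ((DA ^ (j - i)) (f j)) v (m + n - i)
      = if j ≤ m + n then (((m + n - j).choose n : ℕ) : ℂ) • l (f j) v (m + n - j) else 0 := by
    intro j _
    by_cases hjmn : j ≤ m + n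
    · rw [if_pos hjmn]
      have hterm : ∀ i ∈ range (n + 1),
          ((((m + n - i).choose (n - i) : ℕ) : ℂ) * ((-1 : ℂ) ^ j * (j.choose i : ℂ)))
            • l ((DA ^ (j - i)) (f j)) v (m + n - i)
          = ((-1 : ℂ) ^ i * (j.choose i : ℂ) * (((m + n - i).choose (n - i) : ℕ) : ℂ))
            • l (f j) v (m + n - j) := by
        intro i hi
        simp only [Finset.mem_range] at hi
        rw [M2 DA l h0 h1 (j - i) (f j) v (m + n - i)]
        by_cases hij : i ≤ j
        · rw [if_pos (by omega), smul_smul,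
            show (m + n - i) - (j - i) = m + n - j by omega]
          have hsgn : (-1 : ℂ) ^ j * (-1 : ℂ) ^ (j - i) = (-1 : ℂ) ^ i := by
            rw [← pow_add, show j + (j - i) = i + 2 * (j - i) by omega, pow_add,
              pow_mul, neg_one_sq, one_pow, mul_one]
          rw [show (((m + n - i).choose (n - i) : ℕ) : ℂ) * ((-1 : ℂ) ^ j * (j.choose i : ℂ))
                * (-1 : ℂ) ^ (j - i)
              = ((-1 : ℂ) ^ j * (-1 : ℂ) ^ (j - i)) * (j.choose i : ℂ)
                * (((m + n - i).choose (n - i) : ℕ) : ℂ) by ring, hsgn]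
        · rw [Nat.choose_eq_zero_of_lt (show j < i by omega)]
          simp
      rw [Finset.sum_congr rfl hterm, ← Finset.sum_smul, L2 j n m (by omega)]
    · rw [if_neg hjmn]
      apply Finset.sum_eq_zero
      intro i hi
      simp only [Finset.mem_range] at hi
      rw [M2 DA l h0 h1 (j - i) (f j) v (m + n - i), if_neg (by omega), smul_zero]
  rw [Finset.sum_congr rfl hj]
  -- compare the two expressions via the union index set
  set U := f.support ∪ range (m + 1) with hU
  have hL : ∑ j ∈ f.support,
      (if j ≤ m + n then (((m + n - j).choose n : ℕ) : ℂ) • l (f j) v (m + n - j) else 0)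
      = ∑ j ∈ U,
      (if j ≤ m + n then (((m + n - j).choose n : ℕ) : ℂ) • l (f j) v (m + n - j) else 0) := by
    apply Finset.sum_subset Finset.subset_union_left
    intro x _ hx
    rw [Finsupp.notMem_support_iff.mp hx]
    simp
  have hR : ∑ i ∈ range (m + 1),
      (((n + m - i).choose (m - i) : ℕ) : ℂ) • l (f i) v (n + m - i)
      = ∑ i ∈ U, (if i ≤ m
          then (((n + m - i).choose (m - i) : ℕ) : ℂ) • l (f i) v (n + m - i) else 0) := by
    rw [← Finset.sum_subset Finset.subset_union_right (fun x _ hx => by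
      simp only [Finset.mem_range] at hx
      rw [if_neg (by omega)])]
    apply Finset.sum_congr rfl
    intro i hi
    simp only [Finset.mem_range] at hi
    rw [if_pos (by omega)]
  rw [hL, hR]
  apply Finset.sum_congr rfl
  intro j _
  by_cases hjm : j ≤ m
  · rw [if_pos (by omega), if_pos hjm]
    have e1 : m + n - j = n + m - j := by omega
    have e2 : (n + m - j).choose n = (n + m - j).choose (m - j) := by
      rw [← Nat.choose_symm (show m - j ≤ n + m - j by omega)]
      congr 1
      omega
    rw [e1, e2]
  · by_cases hjmn : j ≤ m + n
    · rw [if_pos hjmn, if_neg hjm, Nat.choose_eq_zero_of_lt (show m + n - j < n by omega)]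
      simp
    · rw [if_neg hjmn, if_neg hjm]

/-- Applying the substitution `μ ↦ -λ-μ-∂` to `g(-μ-∂)` recovers `g(λ+μ)` (coefficientwise). -/
lemma SL4' (DM : Module.End ℂ M) (f : ℕ →₀ M) (s m B : ℕ) (hB : ∀ j ∈ f.support, j ≤ B) :
    ∑ k ∈ range (B + 1), ((-1 : ℂ) ^ k * (k.choose s : ℂ) * ((k - s).choose m : ℂ))
        • (DM ^ (k - s - m)) (csubst DM f k)
      = (((m + s).choose s : ℕ) : ℂ) • f (m + s) := by
  have hexp : ∀ k ∈ range (B + 1),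
      ((-1 : ℂ) ^ k * (k.choose s : ℂ) * ((k - s).choose m : ℂ))
        • (DM ^ (k - s - m)) (csubst DM f k)
      = ∑ j ∈ f.support, ((-1 : ℂ) ^ j * ((-1 : ℂ) ^ k * (j.choose k : ℂ) * (k.choose s : ℂ)
            * ((k - s).choose m : ℂ))) • (DM ^ (j - s - m)) (f j) := by
    intro k hk
    have hcs : csubst DM f k
        = ∑ j ∈ f.support, ((-1 : ℂ) ^ j * (j.choose k : ℂ)) • (DM ^ (j - k)) (f j) := rfl
    rw [hcs, map_sum, Finset.smul_sum]
    apply Finset.sum_congr rfl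
    intro j hj
    by_cases hcond : s ≤ k ∧ s + m ≤ k ∧ k ≤ j
    · rw [map_smul, smul_smul, powD_comp, show k - s - m + (j - k) = j - s - m by omega]
      ring_nf
    · rcases Nat.lt_or_ge k s with hks | hks
      · rw [Nat.choose_eq_zero_of_lt (show k < s by omega)]
        simp
      rcases Nat.lt_or_ge (k - s) m with hksm | hksm
      · rw [Nat.choose_eq_zero_of_lt (show k - s < m by omega)]
        simp
      rw [Nat.choose_eq_zero_of_lt (show j < k by omega)]
      simp
  rw [Finset.sum_congr rfl hexp, Finset.sum_comm]
  have hj : ∀ j ∈ f.support,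
      ∑ k ∈ range (B + 1), ((-1 : ℂ) ^ j * ((-1 : ℂ) ^ k * (j.choose k : ℂ) * (k.choose s : ℂ)
            * ((k - s).choose m : ℂ))) • (DM ^ (j - s - m)) (f j)
      = if j = m + s then (((m + s).choose s : ℕ) : ℂ) • f j else 0 := by
    intro j hjsup
    rw [← Finset.sum_smul, ← Finset.mul_sum, L3a j s m B (hB j hjsup)]
    by_cases hc : j = s + m
    · rw [if_pos hc, if_pos (by omega)]
      have hsgn : (-1 : ℂ) ^ j * ((-1 : ℂ) ^ j * (j.choose s : ℂ)) = (j.choose s : ℂ) := by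
        rw [← mul_assoc, ← pow_add, show j + j = 2 * j by omega, pow_mul, neg_one_sq,
          one_pow, one_mul]
      rw [hsgn, show j - s - m = 0 by omega, pow_zero, Module.End.one_apply, hc,
        show s + m = m + s from by omega]
    · rw [if_neg hc, if_neg (by omega), mul_zero, zero_smul]
  rw [Finset.sum_congr rfl hj, Finset.sum_ite_eq' f.support (m + s)]
  by_cases hmem : m + s ∈ f.support
  · rw [if_pos hmem]
  · rw [if_neg hmem, Finsupp.notMem_support_iff.mp hmem, smul_zero]

/-- Core computation: applying `μ ↦ -λ-μ-∂` to `λ^q · g(-λ-μ-∂)` recovers `λ^q g(μ)`. -/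
lemma SL1'' (DM : Module.End ℂ M) (f : ℕ →₀ M) (n' m B : ℕ)
    (hB : ∀ j ∈ f.support, j ≤ B) :
    ∑ q ∈ range (n' + 1), ∑ k ∈ range (B + 1),
      ((-1 : ℂ) ^ k * (k.choose (n' - q) : ℂ) * ((k - (n' - q)).choose m : ℂ))
        • (DM ^ (k - (n' - q) - m)) (csubst2 DM f q k)
      = if n' = 0 then f m else 0 := by
  have hexp : ∀ q ∈ range (n' + 1), ∀ k ∈ range (B + 1),
      ((-1 : ℂ) ^ k * (k.choose (n' - q) : ℂ) * ((k - (n' - q)).choose m : ℂ))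
        • (DM ^ (k - (n' - q) - m)) (csubst2 DM f q k)
      = ∑ j ∈ f.support, (((-1 : ℂ) ^ j * (j.choose q : ℂ))
          * ((-1 : ℂ) ^ k * ((j - q).choose k : ℂ) * (k.choose (n' - q) : ℂ)
            * ((k - (n' - q)).choose m : ℂ)))
          • (DM ^ ((j - q) - (n' - q) - m)) (f j) := by
    intro q hq k hk
    have hcs : csubst2 DM f q k
        = ∑ j ∈ f.support, ((-1 : ℂ) ^ j * (j.choose q : ℂ) * ((j - q).choose k : ℂ))
            • (DM ^ (j - q - k)) (f j) := rfl
    rw [hcs, map_sum, Finset.smul_sum]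
    apply Finset.sum_congr rfl
    intro j hj
    by_cases hcond : (n' - q) ≤ k ∧ (n' - q) + m ≤ k ∧ k ≤ j - q
    · rw [map_smul, smul_smul, powD_comp,
        show k - (n' - q) - m + (j - q - k) = (j - q) - (n' - q) - m by omega]
      ring_nf
    · rcases Nat.lt_or_ge k (n' - q) with hx | hx
      · rw [Nat.choose_eq_zero_of_lt (show k < n' - q by omega)]
        simp
      rcases Nat.lt_or_ge (k - (n' - q)) m with hx2 | hx2
      · rw [Nat.choose_eq_zero_of_lt (show k - (n' - q) < m by omega)]
        simp
      rw [Nat.choose_eq_zero_of_lt (show j - q < k by omega)]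
      simp
  rw [Finset.sum_congr rfl (fun q hq => Finset.sum_congr rfl (hexp q hq))]
  rw [Finset.sum_congr rfl (fun q _ => Finset.sum_comm), Finset.sum_comm]
  have hjval : ∀ j ∈ f.support,
      ∑ q ∈ range (n' + 1), ∑ k ∈ range (B + 1),
        (((-1 : ℂ) ^ j * (j.choose q : ℂ))
          * ((-1 : ℂ) ^ k * ((j - q).choose k : ℂ) * (k.choose (n' - q) : ℂ)
            * ((k - (n' - q)).choose m : ℂ)))
          • (DM ^ ((j - q) - (n' - q) - m)) (f j)
      = if j = n' + m then (if n' = 0 then (1 : ℂ) else 0) • f j else 0 := by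
    intro j hjsup
    have hksum : ∀ q ∈ range (n' + 1),
        ∑ k ∈ range (B + 1),
          (((-1 : ℂ) ^ j * (j.choose q : ℂ))
            * ((-1 : ℂ) ^ k * ((j - q).choose k : ℂ) * (k.choose (n' - q) : ℂ)
              * ((k - (n' - q)).choose m : ℂ)))
            • (DM ^ ((j - q) - (n' - q) - m)) (f j)
        = (((-1 : ℂ) ^ j * (j.choose q : ℂ))
            * (if j - q = (n' - q) + m
                then (-1 : ℂ) ^ (j - q) * ((j - q).choose (n' - q) : ℂ) else 0))
            • (DM ^ ((j - q) - (n' - q) - m)) (f j) := by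
      intro q hq
      rw [← Finset.sum_smul, ← Finset.mul_sum, L3a (j - q) (n' - q) m B (by
        have := hB j hjsup
        omega)]
    rw [Finset.sum_congr rfl hksum]
    by_cases hj : j = n' + m
    · rw [if_pos hj]
      have hterm : ∀ q ∈ range (n' + 1),
          (((-1 : ℂ) ^ j * (j.choose q : ℂ))
            * (if j - q = (n' - q) + m
                then (-1 : ℂ) ^ (j - q) * ((j - q).choose (n' - q) : ℂ) else 0))
            • (DM ^ ((j - q) - (n' - q) - m)) (f j)
          = ((-1 : ℂ) ^ q * ((n' + m).choose q : ℂ)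
              * (((n' - q) + m).choose (n' - q) : ℂ)) • f j := by
        intro q hq
        simp only [Finset.mem_range] at hq
        rw [if_pos (by omega), show (j - q) - (n' - q) - m = 0 by omega, pow_zero,
          Module.End.one_apply]
        have hsgn : (-1 : ℂ) ^ j * (-1 : ℂ) ^ (j - q) = (-1 : ℂ) ^ q := by
          rw [← pow_add, show j + (j - q) = q + 2 * (j - q) by omega, pow_add, pow_mul,
            neg_one_sq, one_pow, mul_one]
        have hch : ((j - q).choose (n' - q) : ℂ) = (((n' - q) + m).choose (n' - q) : ℂ) := by
          congr 2
          omega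
        have hch2 : (j.choose q : ℂ) = ((n' + m).choose q : ℂ) := by rw [hj]
        rw [hch, hch2]
        rw [show ((-1 : ℂ) ^ j * ((n' + m).choose q : ℂ))
              * ((-1 : ℂ) ^ (j - q) * ((((n' - q) + m).choose (n' - q) : ℕ) : ℂ))
            = ((-1 : ℂ) ^ j * (-1 : ℂ) ^ (j - q)) * ((n' + m).choose q : ℂ)
              * ((((n' - q) + m).choose (n' - q) : ℕ) : ℂ) by ring, hsgn]
      rw [Finset.sum_congr rfl hterm, ← Finset.sum_smul, L4 n' m]
    · rw [if_neg hj]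
      apply Finset.sum_eq_zero
      intro q hq
      simp only [Finset.mem_range] at hq
      by_cases hqj : q ≤ j
      · rw [if_neg (by omega)]
        simp
      · rw [Nat.choose_eq_zero_of_lt (show j < q by omega)]
        simp
  rw [Finset.sum_congr rfl hjval, Finset.sum_ite_eq' f.support (n' + m)]
  by_cases hmem : n' + m ∈ f.support
  · rw [if_pos hmem]
    by_cases hn : n' = 0
    · rw [if_pos hn, if_pos hn, one_smul, hn, Nat.zero_add]
    · rw [if_neg hn, if_neg hn, zero_smul]
  · rw [if_neg hmem]
    by_cases hn : n' = 0
    · rw [if_pos hn]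
      have : f m = 0 := by
        have := Finsupp.notMem_support_iff.mp hmem
        rwa [hn, Nat.zero_add] at this
      rw [this]
    · rw [if_neg hn]

lemma SL1 (DM : Module.End ℂ M) (h : ℕ → (ℕ →₀ M)) (n m B : ℕ)
    (hB : ∀ i, i ≤ n → ∀ j ∈ (h i).support, j ≤ B) :
    ∑ p ∈ range (n + 1), ∑ k ∈ range (B + 1),
      ((-1 : ℂ) ^ k * (k.choose (n - p) : ℂ) * ((k - (n - p)).choose m : ℂ))
        • (DM ^ (k - (n - p) - m)) (∑ i ∈ range (p + 1), csubst2 DM (h i) (p - i) k)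
      = h n m := by
  have hdist : ∀ p ∈ range (n + 1), ∀ k ∈ range (B + 1),
      ((-1 : ℂ) ^ k * (k.choose (n - p) : ℂ) * ((k - (n - p)).choose m : ℂ))
        • (DM ^ (k - (n - p) - m)) (∑ i ∈ range (p + 1), csubst2 DM (h i) (p - i) k)
      = ∑ i ∈ range (p + 1),
        ((-1 : ℂ) ^ k * (k.choose (n - p) : ℂ) * ((k - (n - p)).choose m : ℂ))
          • (DM ^ (k - (n - p) - m)) (csubst2 DM (h i) (p - i) k) := by
    intro p _ k _
    rw [map_sum, Finset.smul_sum]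
  rw [Finset.sum_congr rfl (fun p hp => Finset.sum_congr rfl (hdist p hp))]
  rw [Finset.sum_congr rfl (fun p _ => Finset.sum_comm)]
  -- now : ∑ p ∈ range (n+1), ∑ i ∈ range (p+1), ∑ k ∈ range (B+1), ...
  have hswap : ∀ (F : ℕ → ℕ → M),
      (∑ p ∈ range (n + 1), ∑ i ∈ range (p + 1), F p i)
      = ∑ i ∈ range (n + 1), ∑ p ∈ Finset.Ico i (n + 1), F p i := by
    intro F
    simp only [Finset.range_eq_Ico]
    exact (Finset.sum_Ico_Ico_comm 0 (n + 1) (fun i p => F p i)).symm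
  rw [hswap]
  have hinner : ∀ i ∈ range (n + 1),
      ∑ p ∈ Finset.Ico i (n + 1), ∑ k ∈ range (B + 1),
        ((-1 : ℂ) ^ k * (k.choose (n - p) : ℂ) * ((k - (n - p)).choose m : ℂ))
          • (DM ^ (k - (n - p) - m)) (csubst2 DM (h i) (p - i) k)
      = if n - i = 0 then h i m else 0 := by
    intro i hi
    simp only [Finset.mem_range] at hi
    rw [Finset.sum_Ico_eq_sum_range]
    have hr : n + 1 - i = (n - i) + 1 := by omega
    rw [hr]
    have hterm : ∀ q ∈ range ((n - i) + 1),
        (∑ k ∈ range (B + 1),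
          ((-1 : ℂ) ^ k * (k.choose (n - (i + q)) : ℂ) * ((k - (n - (i + q))).choose m : ℂ))
            • (DM ^ (k - (n - (i + q)) - m)) (csubst2 DM (h i) ((i + q) - i) k))
        = ∑ k ∈ range (B + 1),
          ((-1 : ℂ) ^ k * (k.choose ((n - i) - q) : ℂ) * ((k - ((n - i) - q)).choose m : ℂ))
            • (DM ^ (k - ((n - i) - q) - m)) (csubst2 DM (h i) q k) := by
      intro q hq
      have e1 : n - (i + q) = (n - i) - q := by omega
      have e2 : (i + q) - i = q := by omega
      rw [e1, e2]
    rw [Finset.sum_congr rfl hterm]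
    exact SL1'' DM (h i) (n - i) m B (hB i (by omega))
  rw [Finset.sum_congr rfl hinner, Finset.sum_eq_single_of_mem n (by
    simp only [Finset.mem_range]; omega)]
  · rw [if_pos (by omega)]
  · intro i hi hne
    simp only [Finset.mem_range] at hi
    rw [if_neg (by omega)]

/-- Applying `μ ↦ -λ-μ-∂` to `T_λ (g(-μ-∂) v)` recovers `T_λ (g(μ) v)` (coefficientwise),
for `T` right-sesquilinear. -/
lemma SL2 (DM : Module.End ℂ M) (φ : M →ₗ[ℂ] (ℕ →₀ M))
    (h0 : ∀ v, φ (DM v) 0 = DM (φ v 0))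
    (h1 : ∀ v k, φ (DM v) (k + 1) = DM (φ v (k + 1)) + φ v k)
    (y : ℕ →₀ M) (n m B : ℕ) (hB : ∀ j ∈ y.support, j ≤ B) :
    ∑ p ∈ range (n + 1), ∑ k ∈ range (B + 1),
      ((-1 : ℂ) ^ k * (k.choose (n - p) : ℂ) * ((k - (n - p)).choose m : ℂ))
        • (DM ^ (k - (n - p) - m)) (φ (csubst DM y k) p)
      = φ (y m) n := by
  have hexp : ∀ p ∈ range (n + 1), ∀ k ∈ range (B + 1),
      ((-1 : ℂ) ^ k * (k.choose (n - p) : ℂ) * ((k - (n - p)).choose m : ℂ))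
        • (DM ^ (k - (n - p) - m)) (φ (csubst DM y k) p)
      = ∑ j ∈ y.support, ∑ t ∈ range (p + 1),
          ((-1 : ℂ) ^ j * ((-1 : ℂ) ^ k * (j.choose k : ℂ) * (k.choose (n - p) : ℂ)
            * ((k - (n - p)).choose m : ℂ) * ((j - k).choose t : ℂ)))
          • (DM ^ (j - ((n - p) + m + t))) (φ (y j) (p - t)) := by
    intro p hp k hk
    have hcs : csubst DM y k
        = ∑ j ∈ y.support, ((-1 : ℂ) ^ j * (j.choose k : ℂ)) • (DM ^ (j - k)) (y j) := rfl
    rw [hcs, map_sum, Finsupp.finset_sum_apply, map_sum, Finset.smul_sum]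
    apply Finset.sum_congr rfl
    intro j hj
    rw [map_smul, Finsupp.smul_apply, M1 DM φ h0 h1 (j - k) (y j) p,
      Finset.smul_sum, map_sum, Finset.smul_sum]
    apply Finset.sum_congr rfl
    intro t ht
    simp only [Finset.mem_range] at hp hk ht
    rw [map_smul, map_smul, smul_smul, smul_smul, powD_comp]
    by_cases hcond : (n - p) ≤ k ∧ (n - p) + m ≤ k ∧ k ≤ j ∧ t ≤ j - k
    · rw [show k - (n - p) - m + ((j - k) - t) = j - ((n - p) + m + t) by omega]
      ring_nf
    · rcases Nat.lt_or_ge k (n - p) with hx | hx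
      · rw [Nat.choose_eq_zero_of_lt (show k < n - p by omega)]
        simp
      rcases Nat.lt_or_ge (k - (n - p)) m with hx2 | hx2
      · rw [Nat.choose_eq_zero_of_lt (show k - (n - p) < m by omega)]
        simp
      rcases Nat.lt_or_ge j k with hx3 | hx3
      · rw [Nat.choose_eq_zero_of_lt (show j < k by omega)]
        simp
      rw [Nat.choose_eq_zero_of_lt (show j - k < t by omega)]
      simp
  rw [Finset.sum_congr rfl (fun p hp => Finset.sum_congr rfl (hexp p hp))]
  -- reorder sums to j, p, t, k
  rw [Finset.sum_congr rfl (fun p _ => Finset.sum_comm)]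
  rw [Finset.sum_congr rfl (fun p _ => Finset.sum_congr rfl (fun j _ => Finset.sum_comm))]
  rw [Finset.sum_comm]
  -- now : ∑ j ∈ y.support, ∑ p ∈ range (n+1), ∑ t ∈ range (p+1), ∑ k ∈ range (B+1), ...
  have hjval : ∀ j ∈ y.support,
      ∑ p ∈ range (n + 1), ∑ t ∈ range (p + 1), ∑ k ∈ range (B + 1),
        ((-1 : ℂ) ^ j * ((-1 : ℂ) ^ k * (j.choose k : ℂ) * (k.choose (n - p) : ℂ)
          * ((k - (n - p)).choose m : ℂ) * ((j - k).choose t : ℂ)))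
        • (DM ^ (j - ((n - p) + m + t))) (φ (y j) (p - t))
      = if j = m then φ (y j) n else 0 := by
    intro j hjsup
    have hksum : ∀ p ∈ range (n + 1), ∀ t ∈ range (p + 1),
        ∑ k ∈ range (B + 1),
          ((-1 : ℂ) ^ j * ((-1 : ℂ) ^ k * (j.choose k : ℂ) * (k.choose (n - p) : ℂ)
            * ((k - (n - p)).choose m : ℂ) * ((j - k).choose t : ℂ)))
          • (DM ^ (j - ((n - p) + m + t))) (φ (y j) (p - t))
        = (if j = (n - p) + m + t
            then ((-1 : ℂ) ^ t * ((j.choose (n - p) : ℂ) * ((j - (n - p)).choose t : ℂ)))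
            else 0)
          • (DM ^ (j - ((n - p) + m + t))) (φ (y j) (p - t)) := by
      intro p _ t _
      rw [← Finset.sum_smul, ← Finset.mul_sum, L3b j (n - p) m t B (hB j hjsup)]
      congr 1
      by_cases hc : j = (n - p) + m + t
      · rw [if_pos hc, if_pos hc]
        have : (-1 : ℂ) ^ j * (-1 : ℂ) ^ (j + t) = (-1 : ℂ) ^ t := by
          rw [← pow_add, show j + (j + t) = t + 2 * j by omega, pow_add, pow_mul,
            neg_one_sq, one_pow, mul_one]
        rw [← mul_assoc, this]
      · rw [if_neg hc, if_neg hc, mul_zero]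
    rw [Finset.sum_congr rfl (fun p hp => Finset.sum_congr rfl (hksum p hp))]
    by_cases hjm : j = m
    · rw [if_pos hjm]
      rw [Finset.sum_eq_single_of_mem n (by simp only [Finset.mem_range]; omega)]
      · rw [Finset.sum_eq_single_of_mem 0 (by simp only [Finset.mem_range]; omega)]
        · rw [if_pos (by omega), hjm]
          simp
        · intro t ht hne
          rw [if_neg (by omega), zero_smul]
      · intro p hp hne
        simp only [Finset.mem_range] at hp
        apply Finset.sum_eq_zero
        intro t ht
        rw [if_neg (by omega), zero_smul]
    · rw [if_neg hjm]
      have hpsum : ∀ p ∈ range (n + 1),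
          ∑ t ∈ range (p + 1),
            (if j = (n - p) + m + t
              then ((-1 : ℂ) ^ t * ((j.choose (n - p) : ℂ) * ((j - (n - p)).choose t : ℂ)))
              else 0)
            • (DM ^ (j - ((n - p) + m + t))) (φ (y j) (p - t))
          = (if (n - p) + m ≤ j ∧ j - ((n - p) + m) ≤ p
              then (-1 : ℂ) ^ (j - ((n - p) + m)) * (j.choose (n - p) : ℂ)
                * ((j - (n - p)).choose (j - ((n - p) + m)) : ℂ)
              else 0) • φ (y j) (n + m - j) := by
        intro p hp
        simp only [Finset.mem_range] at hp
        by_cases hf : (n - p) + m ≤ j ∧ j - ((n - p) + m) ≤ p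
        · rw [Finset.sum_eq_single_of_mem (j - ((n - p) + m))
            (by simp only [Finset.mem_range]; omega)]
          · rw [if_pos (by omega), if_pos hf,
              show j - ((n - p) + m + (j - ((n - p) + m))) = 0 by omega, pow_zero,
              Module.End.one_apply, show p - (j - ((n - p) + m)) = n + m - j by omega]
            rw [← mul_assoc]
          · intro t ht hne
            rw [if_neg (by omega), zero_smul]
        · rw [if_neg hf]
          rw [Finset.sum_eq_zero, zero_smul]
          intro t ht
          simp only [Finset.mem_range] at ht
          rw [if_neg (by omega), zero_smul]
      rw [Finset.sum_congr rfl hpsum, ← Finset.sum_smul, L6 j n m hjm, zero_smul]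
  rw [Finset.sum_congr rfl hjval, Finset.sum_ite_eq' y.support m]
  by_cases hmem : m ∈ y.support
  · rw [if_pos hmem]
  · rw [if_neg hmem, Finsupp.notMem_support_iff.mp hmem, map_zero]
    simp

end ModuleLemmas


section Assembly
open Finset

variable {A M : Type} [AddCommGroup A] [Module ℂ A] [AddCommGroup M] [Module ℂ M]

/-- The substituted form of the second module axiom:
`r(a_λ b)_{λ+μ} v = l(a)_λ r(b)_μ v - r(b)_μ l(a)_λ v + r(b)_μ r(a)_λ v`. -/
lemma Iprime (S : LSConfAlg A) (Mo : LSConfMod S M) (a b : A) (v : M) (n m : ℕ) :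
    Mo.r b (Mo.l a v n) m - Mo.l a (Mo.r b v m) n
      = Mo.r b (Mo.r a v n) m - comp2 S.mul Mo.r a b v n m := by
  classical
  set Bset : Finset ℕ := ((Finset.range (n + 1)).biUnion (fun i =>
    (Mo.r b (Mo.l a v i)).support ∪ (Mo.r b (Mo.r a v i)).support
      ∪ (Mo.r (S.mul a b i) v).support)) ∪ (Mo.r b v).support with hBset
  set B := Bset.sup id with hBdef
  have hBmem : ∀ j ∈ Bset, j ≤ B := fun j hj => Finset.le_sup (f := id) hj
  have hB1 : ∀ i, i ≤ n → ∀ j ∈ (Mo.r b (Mo.l a v i)).support, j ≤ B := by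
    intro i hi j hj
    apply hBmem
    rw [hBset]
    apply Finset.mem_union_left
    rw [Finset.mem_biUnion]
    exact ⟨i, Finset.mem_range.2 (by omega), by simp [Finset.mem_union, hj]⟩
  have hB3 : ∀ i, i ≤ n → ∀ j ∈ (Mo.r b (Mo.r a v i)).support, j ≤ B := by
    intro i hi j hj
    apply hBmem
    rw [hBset]
    apply Finset.mem_union_left
    rw [Finset.mem_biUnion]
    exact ⟨i, Finset.mem_range.2 (by omega), by simp [Finset.mem_union, hj]⟩
  have hB4 : ∀ i, i ≤ n → ∀ j ∈ (Mo.r (S.mul a b i) v).support, j ≤ B := by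
    intro i hi j hj
    apply hBmem
    rw [hBset]
    apply Finset.mem_union_left
    rw [Finset.mem_biUnion]
    exact ⟨i, Finset.mem_range.2 (by omega), by simp [Finset.mem_union, hj]⟩
  have hB2 : ∀ j ∈ (Mo.r b v).support, j ≤ B := by
    intro j hj
    apply hBmem
    rw [hBset]
    exact Finset.mem_union_right _ hj
  have hsum : ∑ p ∈ range (n + 1), ∑ k ∈ range (B + 1),
      ((-1 : ℂ) ^ k * (k.choose (n - p) : ℂ) * ((k - (n - p)).choose m : ℂ))
        • (Mo.DM ^ (k - (n - p) - m))
          ((∑ i ∈ range (p + 1), csubst2 Mo.DM (Mo.r b (Mo.l a v i)) (p - i) k)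
            - Mo.l a (csubst Mo.DM (Mo.r b v) k) p)
      = ∑ p ∈ range (n + 1), ∑ k ∈ range (B + 1),
      ((-1 : ℂ) ^ k * (k.choose (n - p) : ℂ) * ((k - (n - p)).choose m : ℂ))
        • (Mo.DM ^ (k - (n - p) - m))
          ((∑ i ∈ range (p + 1), csubst2 Mo.DM (Mo.r b (Mo.r a v i)) (p - i) k)
            - csubst Mo.DM (Mo.r (S.mul a b p) v) k) :=
    Finset.sum_congr rfl (fun p _ => Finset.sum_congr rfl
      (fun k _ => by rw [Mo.compat_r a b v p k]))
  simp only [map_sub, smul_sub, Finset.sum_sub_distrib] at hsum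
  rw [SL1 Mo.DM (fun i => Mo.r b (Mo.l a v i)) n m B hB1,
    SL2 Mo.DM (Mo.l a) (fun w => Mo.l_sesq_right_zero a w)
      (fun w k => Mo.l_sesq_right a w k) (Mo.r b v) n m B hB2,
    SL1 Mo.DM (fun i => Mo.r b (Mo.r a v i)) n m B hB3] at hsum
  have hlast : ∑ p ∈ range (n + 1), ∑ k ∈ range (B + 1),
      ((-1 : ℂ) ^ k * (k.choose (n - p) : ℂ) * ((k - (n - p)).choose m : ℂ))
        • (Mo.DM ^ (k - (n - p) - m)) (csubst Mo.DM (Mo.r (S.mul a b p) v) k)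
      = comp2 S.mul Mo.r a b v n m := by
    have hp : ∀ p ∈ range (n + 1),
        ∑ k ∈ range (B + 1),
          ((-1 : ℂ) ^ k * (k.choose (n - p) : ℂ) * ((k - (n - p)).choose m : ℂ))
            • (Mo.DM ^ (k - (n - p) - m)) (csubst Mo.DM (Mo.r (S.mul a b p) v) k)
        = (((m + n - p).choose (n - p) : ℕ) : ℂ) • Mo.r (S.mul a b p) v (m + n - p) := by
      intro p hp
      simp only [Finset.mem_range] at hp
      rw [SL4' Mo.DM (Mo.r (S.mul a b p) v) (n - p) m B (hB4 p (by omega)),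
        show m + (n - p) = m + n - p by omega]
    rw [Finset.sum_congr rfl hp]
    rfl
  rw [hlast] at hsum
  exact hsum

end Assembly

/-- for a finite module `(M, l, r)` over a left-symmetric conformal
algebra `A`, the map `ρ = l - r` is a representation of the sub-adjacent Lie
conformal algebra `g(A)` (whose bracket is `[a_λ b] = a_λ b - b_{-λ-∂} a`). -/
theorem l_minus_r_is_representation {A M : Type}
    [AddCommGroup A] [Module ℂ A] [AddCommGroup M] [Module ℂ M]
    (S : LSConfAlg A) (Mo : LSConfMod S M)
    (hfin : ∃ s : Finset M, ∀ v : M,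
      v ∈ Submodule.span ℂ {y : M | ∃ x ∈ s, ∃ n : ℕ, (Mo.DM ^ n) x = y}) :
    ∀ (a b : A) (v : M) (n m : ℕ),
      (∑ i ∈ Finset.range (n + 1), (((m + n - i).choose (n - i) : ℕ) : ℂ) •
          (Mo.l (S.mul a b i - csubst S.D (S.mul b a) i) v (m + n - i)
            - Mo.r (S.mul a b i - csubst S.D (S.mul b a) i) v (m + n - i)))
      = (Mo.l a (Mo.l b v m - Mo.r b v m) n - Mo.r a (Mo.l b v m - Mo.r b v m) n)
        - (Mo.l b (Mo.l a v n - Mo.r a v n) m - Mo.r b (Mo.l a v n - Mo.r a v n) m) := by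
  intro a b v n m
  have h1 := Mo.compat_l a b v n m
  have h2 := Iprime S Mo a b v n m
  have h3 := Iprime S Mo b a v m n
  simp only [map_sub, LinearMap.sub_apply, Finsupp.sub_apply, smul_sub,
    Finset.sum_sub_distrib]
  have hc1 : ∑ i ∈ Finset.range (n + 1), (((m + n - i).choose (n - i) : ℕ) : ℂ)
      • Mo.l (S.mul a b i) v (m + n - i) = comp2 S.mul Mo.l a b v n m := rfl
  have hc2 : ∑ i ∈ Finset.range (n + 1), (((m + n - i).choose (n - i) : ℕ) : ℂ)
      • Mo.r (S.mul a b i) v (m + n - i) = comp2 S.mul Mo.r a b v n m := rfl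
  have hs1 := SA S.D Mo.l Mo.l_sesq_left_zero Mo.l_sesq_left (S.mul b a) v n m
  have hs2 := SA S.D Mo.r Mo.r_sesq_left_zero Mo.r_sesq_left (S.mul b a) v n m
  have hc3 : ∑ i ∈ Finset.range (m + 1), (((n + m - i).choose (m - i) : ℕ) : ℂ)
      • Mo.l (S.mul b a i) v (n + m - i) = comp2 S.mul Mo.l b a v m n := rfl
  have hc4 : ∑ i ∈ Finset.range (m + 1), (((n + m - i).choose (m - i) : ℕ) : ℂ)
      • Mo.r (S.mul b a i) v (n + m - i) = comp2 S.mul Mo.r b a v m n := rfl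
  rw [hc1, hc2, hs1, hs2, hc3, hc4]
  have hA : comp2 S.mul Mo.l a b v n m
      = (comp2 S.mul Mo.l b a v m n - Mo.l b (Mo.l a v n) m) + Mo.l a (Mo.l b v m) n :=
    sub_eq_iff_eq_add.mp h1
  have hBq : comp2 S.mul Mo.r a b v n m
      = Mo.r b (Mo.r a v n) m - (Mo.r b (Mo.l a v n) m - Mo.l a (Mo.r b v m) n) := by
    rw [h2]
    abel
  have hCq : comp2 S.mul Mo.r b a v m n
      = Mo.r a (Mo.r b v m) n - (Mo.r a (Mo.l b v m) n - Mo.l b (Mo.r a v n) m) := by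
    rw [h3]
    abel
  rw [hA, hBq, hCq]
  abel
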